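/- arXiv:2603.07514 — 4 statements merged into one kernel-verified Lean document; each statement's English description precedes it below -/
import Mathlib

section
/- Let τ > 0, η > 0, and let k_τ be the Gaussian kernel on ℝ^D. Let p and q be probability distributions on ℝ^D such that the relevant kernel expectations are finite. Define the drifting discrepancy field Δ_{p,q}(x) = η(V_{p,k_τ}(x) − V_{q,k_τ}(x)). Then Δ_{p,q}(x) = ητ²(s_{p,k_τ}(x) − s_{q,k_τ}(x)) for all x, and consequently the drifting objective satisfies E_{x∼q}[‖Δ_{p,q}(x)‖₂²] = η²τ⁴ E_{x∼q}[‖s_{p,k_τ}(x) − s_{q,k_τ}(x)‖₂²], i.e., it equals η²τ⁴ times the reverse Fisher divergence between the Gaussian-smoothed data distribution and the Gaussian-smoothed model distribution, evaluated under the model distribution. -/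
open MeasureTheory

/-- The Gaussian kernel with bandwidth `τ` on `ℝ^D`. -/
noncomputable def gaussKernel (D : ℕ) (τ : ℝ) (x y : EuclideanSpace ℝ (Fin D)) : ℝ :=
  Real.exp (-‖x - y‖ ^ 2 / (2 * τ ^ 2))

/-- The kernel-smoothed profile `π_k(x) = E_{y∼π}[k(x,y)]`. -/
noncomputable def smoothedProfile {D : ℕ}
    (k : EuclideanSpace ℝ (Fin D) → EuclideanSpace ℝ (Fin D) → ℝ)
    (π : Measure (EuclideanSpace ℝ (Fin D))) (x : EuclideanSpace ℝ (Fin D)) : ℝ :=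
  ∫ y, k x y ∂π

/-- The mean-shift direction `V_{π,k}(x)`. -/
noncomputable def meanShift {D : ℕ}
    (k : EuclideanSpace ℝ (Fin D) → EuclideanSpace ℝ (Fin D) → ℝ)
    (π : Measure (EuclideanSpace ℝ (Fin D))) (x : EuclideanSpace ℝ (Fin D)) :
    EuclideanSpace ℝ (Fin D) :=
  (smoothedProfile k π x)⁻¹ • ∫ y, k x y • (y - x) ∂π

/-- The kernel-induced score `s_{π,k}(x) = ∇_x log π_k(x)`. -/
noncomputable def kernelScore {D : ℕ}
    (k : EuclideanSpace ℝ (Fin D) → EuclideanSpace ℝ (Fin D) → ℝ)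
    (π : Measure (EuclideanSpace ℝ (Fin D))) (x : EuclideanSpace ℝ (Fin D)) :
    EuclideanSpace ℝ (Fin D) :=
  gradient (fun z => Real.log (smoothedProfile k π z)) x

/-- The drifting discrepancy field `Δ_{p,q}(x) = η (V_{p,k}(x) − V_{q,k}(x))`. -/
noncomputable def driftField {D : ℕ} (η : ℝ)
    (k : EuclideanSpace ℝ (Fin D) → EuclideanSpace ℝ (Fin D) → ℝ)
    (p q : Measure (EuclideanSpace ℝ (Fin D))) (x : EuclideanSpace ℝ (Fin D)) :
    EuclideanSpace ℝ (Fin D) :=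
  η • (meanShift k p x - meanShift k q x)

/- ### Auxiliary lemmas -/

set_option maxHeartbeats 1000000
set_option synthInstance.maxHeartbeats 400000

lemma gaussKernel_pos {D : ℕ} (τ : ℝ) (x y : EuclideanSpace ℝ (Fin D)) :
    0 < gaussKernel D τ x y := Real.exp_pos _

lemma gaussKernel_continuous {D : ℕ} (τ : ℝ) (x : EuclideanSpace ℝ (Fin D)) :
    Continuous (fun y => gaussKernel D τ x y) := by
  unfold gaussKernel
  fun_prop

/-- Global bound `t e^{-t²/(2τ²)} ≤ 2τ`. -/
lemma gauss_mul_bound {τ : ℝ} (hτ : 0 < τ) {t : ℝ} (ht : 0 ≤ t) :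
    t * Real.exp (-t ^ 2 / (2 * τ ^ 2)) ≤ 2 * τ := by
  rcases le_or_gt t τ with h | h
  · have h1 : Real.exp (-t ^ 2 / (2 * τ ^ 2)) ≤ 1 := by
      rw [Real.exp_le_one_iff]
      apply div_nonpos_of_nonpos_of_nonneg (by nlinarith [sq_nonneg t]) (by positivity)
    nlinarith [Real.exp_pos (-t ^ 2 / (2 * τ ^ 2))]
  · have ht0 : 0 < t := lt_trans hτ h
    have hs0 : 0 < t ^ 2 / (2 * τ ^ 2) := by positivity
    have h1 : t ^ 2 / (2 * τ ^ 2) ≤ Real.exp (t ^ 2 / (2 * τ ^ 2)) :=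
      le_trans (le_add_of_nonneg_right zero_le_one) (Real.add_one_le_exp _)
    have h2 : Real.exp (-t ^ 2 / (2 * τ ^ 2)) = (Real.exp (t ^ 2 / (2 * τ ^ 2)))⁻¹ := by
      rw [neg_div, Real.exp_neg]
    have h3 : (Real.exp (t ^ 2 / (2 * τ ^ 2)))⁻¹ ≤ (t ^ 2 / (2 * τ ^ 2))⁻¹ :=
      inv_anti₀ hs0 h1
    rw [h2]
    calc t * (Real.exp (t ^ 2 / (2 * τ ^ 2)))⁻¹
        ≤ t * (2 * τ ^ 2 / t ^ 2) := by
          have h4 : (t ^ 2 / (2 * τ ^ 2))⁻¹ = 2 * τ ^ 2 / t ^ 2 := inv_div _ _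
          rw [h4] at h3
          exact mul_le_mul_of_nonneg_left h3 ht
      _ = 2 * τ ^ 2 / t := by field_simp
      _ ≤ 2 * τ := by rw [div_le_iff₀ ht0]; nlinarith

lemma gaussKernel_mul_norm_bound {D : ℕ} {τ : ℝ} (hτ : 0 < τ)
    (x y : EuclideanSpace ℝ (Fin D)) :
    gaussKernel D τ x y * ‖y - x‖ ≤ 2 * τ := by
  have := gauss_mul_bound hτ (norm_nonneg (x - y))
  rw [gaussKernel, mul_comm]
  rwa [norm_sub_rev y x]

/-- The smoothed profile of the Gaussian kernel is positive. -/
lemma smoothedProfile_pos {D : ℕ} (τ : ℝ) (π : Measure (EuclideanSpace ℝ (Fin D)))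
    [IsProbabilityMeasure π] (x : EuclideanSpace ℝ (Fin D))
    (hint : Integrable (fun y => gaussKernel D τ x y) π) :
    0 < smoothedProfile (gaussKernel D τ) π x := by
  rw [smoothedProfile]
  rw [integral_pos_iff_support_of_nonneg (fun y => (gaussKernel_pos τ x y).le) hint]
  have : Function.support (fun y => gaussKernel D τ x y) = Set.univ := by
    ext y; simp [Function.mem_support, (gaussKernel_pos τ x y).ne']
  rw [this]
  simp

/-- Integrability of the shifted-vector integrand. -/
lemma integrable_gauss_smul {D : ℕ} {τ : ℝ} (hτ : 0 < τ)
    (π : Measure (EuclideanSpace ℝ (Fin D))) [IsProbabilityMeasure π]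
    (x : EuclideanSpace ℝ (Fin D)) :
    Integrable (fun y => gaussKernel D τ x y • (y - x)) π := by
  apply Integrable.mono' (integrable_const (2 * τ))
  · exact (((gaussKernel_continuous τ x).smul
      (continuous_id.sub continuous_const)).aestronglyMeasurable)
  · filter_upwards with y
    rw [norm_smul, Real.norm_eq_abs, abs_of_pos (gaussKernel_pos τ x y)]
    exact gaussKernel_mul_norm_bound hτ x y

/-- The Fréchet derivative of the Gaussian kernel in its first argument. -/
lemma gaussKernel_hasFDerivAt {D : ℕ} {τ : ℝ} (hτ : 0 < τ)
    (y z : EuclideanSpace ℝ (Fin D)) :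
    HasFDerivAt (fun w => gaussKernel D τ w y)
      ((τ ^ 2)⁻¹ • gaussKernel D τ z y • innerSL ℝ (y - z)) z := by
  have h1 : HasFDerivAt (fun w : EuclideanSpace ℝ (Fin D) => w - y)
      (ContinuousLinearMap.id ℝ _) z := (hasFDerivAt_id z).sub_const y
  have h2 : HasFDerivAt (fun w : EuclideanSpace ℝ (Fin D) => ‖w - y‖ ^ 2)
      (2 • (innerSL ℝ (z - y)).comp (ContinuousLinearMap.id ℝ _)) z := h1.norm_sq
  have h3 := h2.const_mul (-(2 * τ ^ 2)⁻¹)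
  have h4 := h3.exp
  have hτ2 : (τ : ℝ) ^ 2 ≠ 0 := by positivity
  have hfun : (fun w : EuclideanSpace ℝ (Fin D) => gaussKernel D τ w y)
      = fun w => Real.exp (-(2 * τ ^ 2)⁻¹ * ‖w - y‖ ^ 2) := by
    funext w
    rw [gaussKernel]
    congr 1
    field_simp
  rw [hfun]
  refine h4.congr_fderiv ?_
  ext w
  simp only [ContinuousLinearMap.smul_apply, ContinuousLinearMap.coe_smul',
    Pi.smul_apply, ContinuousLinearMap.coe_comp', Function.comp_apply,
    ContinuousLinearMap.coe_id', id_eq, innerSL_apply_apply, smul_eq_mul, gaussKernel]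
  have hexp : Real.exp (-‖z - y‖ ^ 2 / (2 * τ ^ 2))
      = Real.exp (-(2 * τ ^ 2)⁻¹ * ‖z - y‖ ^ 2) := by
    congr 1; field_simp
  rw [hexp, inner_sub_left, inner_sub_left]
  field_simp
  ring

/-- The gradient of the smoothed profile. -/
lemma smoothedProfile_hasGradientAt {D : ℕ} {τ : ℝ} (hτ : 0 < τ)
    (π : Measure (EuclideanSpace ℝ (Fin D))) [IsProbabilityMeasure π]
    (x : EuclideanSpace ℝ (Fin D))
    (hint : ∀ x, Integrable (fun y => gaussKernel D τ x y) π) :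
    HasGradientAt (smoothedProfile (gaussKernel D τ) π)
      ((τ ^ 2)⁻¹ • ∫ y, gaussKernel D τ x y • (y - x) ∂π) x := by
  rw [hasGradientAt_iff_hasFDerivAt]
  have key := hasFDerivAt_integral_of_dominated_of_fderiv_le (𝕜 := ℝ) (μ := π) (x₀ := x)
    (F := fun z y => gaussKernel D τ z y)
    (F' := fun z y => (τ ^ 2)⁻¹ • gaussKernel D τ z y • innerSL ℝ (y - z))
    (bound := fun _ => (τ ^ 2)⁻¹ * (2 * τ)) (s := Metric.ball x 1) (Metric.ball_mem_nhds x one_pos)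
    (Filter.Eventually.of_forall fun z => (gaussKernel_continuous τ z).aestronglyMeasurable)
    (hint x)
    (by
      apply Continuous.aestronglyMeasurable
      exact Continuous.smul (continuous_const : Continuous fun _ : EuclideanSpace ℝ (Fin D) => (τ ^ 2)⁻¹)
        ((gaussKernel_continuous τ x).smul
          ((innerSL ℝ).continuous.comp (continuous_id.sub continuous_const))))
    (by
      filter_upwards with y z _
      apply ContinuousLinearMap.opNorm_le_bound _ (by positivity)
      intro w
      simp only [ContinuousLinearMap.smul_apply, innerSL_apply_apply, smul_eq_mul, Real.norm_eq_abs]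
      rw [abs_mul, abs_mul,
        abs_of_nonneg (by positivity : (0:ℝ) ≤ (τ ^ 2)⁻¹),
        abs_of_pos (gaussKernel_pos τ z y)]
      have hi : |(inner ℝ (y - z) w : ℝ)| ≤ ‖y - z‖ * ‖w‖ := abs_real_inner_le_norm _ _
      have hb : gaussKernel D τ z y * ‖y - z‖ ≤ 2 * τ := gaussKernel_mul_norm_bound hτ z y
      have h1 : gaussKernel D τ z y * |(inner ℝ (y - z) w : ℝ)| ≤ 2 * τ * ‖w‖ := by
        calc gaussKernel D τ z y * |(inner ℝ (y - z) w : ℝ)|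
            ≤ gaussKernel D τ z y * (‖y - z‖ * ‖w‖) :=
              mul_le_mul_of_nonneg_left hi (gaussKernel_pos τ z y).le
          _ = gaussKernel D τ z y * ‖y - z‖ * ‖w‖ := by ring
          _ ≤ 2 * τ * ‖w‖ := mul_le_mul_of_nonneg_right hb (norm_nonneg w)
      calc (τ ^ 2)⁻¹ * (gaussKernel D τ z y * |(inner ℝ (y - z) w : ℝ)|)
          ≤ (τ ^ 2)⁻¹ * (2 * τ * ‖w‖) := mul_le_mul_of_nonneg_left h1 (by positivity)
        _ = (τ ^ 2)⁻¹ * (2 * τ) * ‖w‖ := by ring)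
    (integrable_const _)
    (by
      filter_upwards with y z _
      exact gaussKernel_hasFDerivAt hτ y z)
  refine key.congr_fderiv ?_
  symm
  rw [integral_smul]
  rw [_root_.map_smul]
  congr 1
  have heq : (fun y => gaussKernel D τ x y • innerSL ℝ (y - x))
      = fun y => innerSL ℝ (gaussKernel D τ x y • (y - x)) := by
    ext y w
    simp [inner_smul_left, real_inner_comm]
  rw [show (InnerProductSpace.toDual ℝ (EuclideanSpace ℝ (Fin D)))
      (∫ y, gaussKernel D τ x y • (y - x) ∂π)
      = innerSL ℝ (∫ y, gaussKernel D τ x y • (y - x) ∂π) by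
    ext w; simp [InnerProductSpace.toDual_apply_apply]]
  rw [heq]
  exact ((innerSL ℝ).integral_comp_comm (integrable_gauss_smul hτ π x)).symm

/-- The kernel-induced score is `τ⁻²` times the mean shift. -/
lemma kernelScore_eq_meanShift {D : ℕ} {τ : ℝ} (hτ : 0 < τ)
    (π : Measure (EuclideanSpace ℝ (Fin D))) [IsProbabilityMeasure π]
    (hint : ∀ x, Integrable (fun y => gaussKernel D τ x y) π)
    (x : EuclideanSpace ℝ (Fin D)) :
    kernelScore (gaussKernel D τ) π x = (τ ^ 2)⁻¹ • meanShift (gaussKernel D τ) π x := by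
  have hg := smoothedProfile_hasGradientAt hτ π x hint
  have hpos := smoothedProfile_pos τ π x (hint x)
  have hlog : HasGradientAt (fun z => Real.log (smoothedProfile (gaussKernel D τ) π z))
      ((smoothedProfile (gaussKernel D τ) π x)⁻¹ •
        ((τ ^ 2)⁻¹ • ∫ y, gaussKernel D τ x y • (y - x) ∂π)) x := by
    rw [hasGradientAt_iff_hasFDerivAt] at hg ⊢
    have := (Real.hasDerivAt_log hpos.ne').comp_hasFDerivAt x hg
    rw [_root_.map_smul]
    exact this
  rw [kernelScore, hlog.gradient, meanShift, smul_comm]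

/-- Gaussian-kernel drifting equals smoothed-score matching.
For the Gaussian kernel with bandwidth `τ > 0` and step size `η > 0`, the drifting
discrepancy field satisfies `Δ_{p,q}(x) = ητ² (s_{p,k_τ}(x) − s_{q,k_τ}(x))` for all `x`, and
consequently the drifting objective equals `η²τ⁴` times the reverse Fisher divergence between
the Gaussian-smoothed data and model distributions, evaluated under the model distribution. -/
theorem gaussian_drifting_eq_score_matching {D : ℕ} (τ η : ℝ) (hτ : 0 < τ) (hη : 0 < η)
    (p q : Measure (EuclideanSpace ℝ (Fin D)))
    [IsProbabilityMeasure p] [IsProbabilityMeasure q]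
    (hkp : ∀ x, Integrable (fun y => gaussKernel D τ x y) p)
    (hkp1 : ∀ x, Integrable (fun y => gaussKernel D τ x y * ‖y‖) p)
    (hkq : ∀ x, Integrable (fun y => gaussKernel D τ x y) q)
    (hkq1 : ∀ x, Integrable (fun y => gaussKernel D τ x y * ‖y‖) q) :
    (∀ x, driftField η (gaussKernel D τ) p q x
        = (η * τ ^ 2) • (kernelScore (gaussKernel D τ) p x - kernelScore (gaussKernel D τ) q x))
    ∧
    (∫ x, ‖driftField η (gaussKernel D τ) p q x‖ ^ 2 ∂q)
      = η ^ 2 * τ ^ 4 *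
        ∫ x, ‖kernelScore (gaussKernel D τ) p x - kernelScore (gaussKernel D τ) q x‖ ^ 2 ∂q := by
  have hτ2 : (τ : ℝ) ^ 2 ≠ 0 := by positivity
  have h1 : ∀ x, driftField η (gaussKernel D τ) p q x
      = (η * τ ^ 2) • (kernelScore (gaussKernel D τ) p x - kernelScore (gaussKernel D τ) q x) := by
    intro x
    rw [kernelScore_eq_meanShift hτ p hkp x, kernelScore_eq_meanShift hτ q hkq x,
      driftField, ← smul_sub, smul_smul]
    congr 1
    field_simp
  refine ⟨h1, ?_⟩
  have hpt : ∀ x, ‖driftField η (gaussKernel D τ) p q x‖ ^ 2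
      = η ^ 2 * τ ^ 4 *
        ‖kernelScore (gaussKernel D τ) p x - kernelScore (gaussKernel D τ) q x‖ ^ 2 := by
    intro x
    rw [h1 x, norm_smul, Real.norm_eq_abs, abs_of_pos (by positivity : 0 < η * τ ^ 2)]
    ring
  simp_rw [hpt]
  rw [integral_const_mul]
end

section
/- Let k_τ(x,y) = exp(−ρ(‖x−y‖₂/τ)) be a translation-invariant radial kernel on ℝ^D with ρ : [0,∞) → ℝ differentiable, τ > 0, and define b_τ(r) = ρ'(r/τ)/(r/τ). Let π be a probability distribution with density such that the relevant expectations are finite, and let π_τ(·|x) denote the kernel-reweighted law with density proportional to k_τ(x,y)π(y). Then wherever the kernel-induced score s_{π,k_τ}(x) = ∇_x log E_{y∼π}[k_τ(x,y)] exists, it satisfies τ² s_{π,k_τ}(x) = E_{y∼π_τ(·|x)}[ b_τ(‖x−y‖₂) (y − x) ]. -/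
open MeasureTheory

/-- A translation-invariant radial kernel `k_τ(x,y) = exp(−ρ(‖x−y‖₂/τ))`. -/
noncomputable def radialKernel (D : ℕ) (ρ : ℝ → ℝ) (τ : ℝ)
    (x y : EuclideanSpace ℝ (Fin D)) : ℝ :=
  Real.exp (-ρ (‖x - y‖ / τ))

/-- The radius-dependent weight `b_τ(r) = ρ'(r/τ)/(r/τ)`. -/
noncomputable def radialWeight (ρ' : ℝ → ℝ) (τ r : ℝ) : ℝ :=
  ρ' (r / τ) / (r / τ)

/-- Expectation of a vector-valued function under the kernel-reweighted conditional law
`π_τ(y|x) ∝ k(x,y) π(y)`:  `E_{y∼π_τ(·|x)}[g(y)] = E_π[k(x,·) g] / E_π[k(x,·)]`. -/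
noncomputable def reweightedExp {D : ℕ}
    (k : EuclideanSpace ℝ (Fin D) → EuclideanSpace ℝ (Fin D) → ℝ)
    (π : Measure (EuclideanSpace ℝ (Fin D))) (x : EuclideanSpace ℝ (Fin D))
    (g : EuclideanSpace ℝ (Fin D) → EuclideanSpace ℝ (Fin D)) :
    EuclideanSpace ℝ (Fin D) :=
  (smoothedProfile k π x)⁻¹ • ∫ y, k x y • g y ∂π

lemma hasDerivAt_hfun (ρ ρ' : ℝ → ℝ) (τ : ℝ) (hτ : τ ≠ 0)
    (hρ : ∀ r, HasDerivAt ρ (ρ' r) r) (r : ℝ) :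
    HasDerivAt (fun s => Real.exp (-ρ (s / τ)))
      (-(ρ' (r / τ) / τ) * Real.exp (-ρ (r / τ))) r := by
  have h1 : HasDerivAt (fun s : ℝ => s / τ) (1 / τ) r := by
    simpa using (hasDerivAt_id r).div_const τ
  have h2 := ((hρ (r / τ)).comp r h1).neg
  have h4 := h2.exp
  refine h4.congr_deriv ?_
  show Real.exp (-ρ (r / τ)) * -(ρ' (r / τ) * (1 / τ)) = -(ρ' (r / τ) / τ) * Real.exp (-ρ (r / τ))
  ring

lemma hasFDerivAt_norm_sub {D : ℕ} (y x' : EuclideanSpace ℝ (Fin D)) (h : x' ≠ y) :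
    HasFDerivAt (fun z => ‖z - y‖) ((innerSL ℝ) (‖x' - y‖⁻¹ • (x' - y))) x' := by
  have hne : x' - y ≠ 0 := sub_ne_zero.mpr h
  have h1 : HasFDerivAt (fun z : EuclideanSpace ℝ (Fin D) => z - y)
      (ContinuousLinearMap.id ℝ _) x' := (hasFDerivAt_id x').sub_const y
  have h2 := h1.norm_sq
  have hsq : ‖x' - y‖ ^ 2 ≠ 0 := pow_ne_zero _ (norm_ne_zero_iff.mpr hne)
  have h3 := (Real.hasDerivAt_sqrt hsq).comp_hasFDerivAt x' h2
  have heq : (fun z : EuclideanSpace ℝ (Fin D) => Real.sqrt (‖z - y‖ ^ 2))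
      = fun z => ‖z - y‖ := by
    funext z; rw [Real.sqrt_sq (norm_nonneg _)]
  rw [show ((fun x => Real.sqrt x) ∘ fun z : EuclideanSpace ℝ (Fin D) => ‖z - y‖ ^ 2)
      = fun z => ‖z - y‖ from heq ▸ rfl] at h3
  refine h3.congr_fderiv ?_
  have hn : ‖x' - y‖ ≠ 0 := norm_ne_zero_iff.mpr hne
  ext z
  simp only [innerSL_apply_apply, ContinuousLinearMap.smul_apply, ContinuousLinearMap.comp_id,
    Real.sqrt_sq (norm_nonneg (x' - y)), real_inner_smul_left, smul_eq_mul, two_smul,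
    ContinuousLinearMap.add_apply]
  field_simp
  ring

lemma kernel_hasFDerivAt {D : ℕ} (ρ ρ' : ℝ → ℝ) (τ : ℝ) (hτ : 0 < τ)
    (hρ : ∀ r, HasDerivAt ρ (ρ' r) r) (y x' : EuclideanSpace ℝ (Fin D)) (h : x' ≠ y) :
    HasFDerivAt (fun z => radialKernel D ρ τ z y)
      ((innerSL ℝ) ((τ ^ 2)⁻¹ •
        (radialKernel D ρ τ x' y * radialWeight ρ' τ ‖x' - y‖) • (y - x'))) x' := by
  have hr := hasFDerivAt_norm_sub y x' h
  have hcomp := (hasDerivAt_hfun ρ ρ' τ (ne_of_gt hτ) hρ ‖x' - y‖).comp_hasFDerivAt x' hr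
  have hrn : ‖x' - y‖ ≠ 0 := norm_ne_zero_iff.mpr (sub_ne_zero.mpr h)
  refine hcomp.congr_fderiv ?_
  rw [← _root_.map_smul]
  congr 1
  rw [smul_smul, smul_smul, show y - x' = -(x' - y) from (neg_sub x' y).symm, smul_neg,
    ← neg_smul]
  congr 1
  unfold radialKernel radialWeight
  field_simp

lemma kernel_pair_bound {D : ℕ} (ρ ρ' : ℝ → ℝ) (τ : ℝ) (hτ : 0 < τ)
    (hρ : ∀ r, HasDerivAt ρ (ρ' r) r) (x : EuclideanSpace ℝ (Fin D)) (ε : ℝ)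
    (y : EuclideanSpace ℝ (Fin D)) (C : ℝ)
    (hb : ∀ x' ∈ Metric.ball x ε,
      (τ ^ 2)⁻¹ * |radialWeight ρ' τ ‖x' - y‖| * ‖y - x'‖ * radialKernel D ρ τ x' y ≤ C)
    {x₁ x₂ : EuclideanSpace ℝ (Fin D)} (h₁ : x₁ ∈ Metric.ball x ε) (h₂ : x₂ ∈ Metric.ball x ε)
    (hle : ‖x₁ - y‖ ≤ ‖x₂ - y‖) :
    |radialKernel D ρ τ x₁ y - radialKernel D ρ τ x₂ y| ≤ C * ‖x₁ - x₂‖ := by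
  have hC : 0 ≤ C := le_trans (by rw [radialKernel]; positivity) (hb x₁ h₁)
  rcases eq_or_lt_of_le hle with heq | hlt
  · rw [radialKernel, radialKernel, heq, sub_self, abs_zero]
    exact mul_nonneg hC (norm_nonneg _)
  · have hcont : Continuous (fun s : ℝ => Real.exp (-ρ (s / τ))) := by
      refine Real.continuous_exp.comp (Continuous.neg ?_)
      exact (continuous_iff_continuousAt.mpr fun r => (hρ r).continuousAt).comp
        (continuous_id.div_const τ)
    obtain ⟨ξ, hξ, hslope⟩ := exists_hasDerivAt_eq_slope (fun s => Real.exp (-ρ (s / τ)))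
      (fun s => -(ρ' (s / τ) / τ) * Real.exp (-ρ (s / τ))) hlt hcont.continuousOn
      (fun s _ => hasDerivAt_hfun ρ ρ' τ (ne_of_gt hτ) hρ s)
    have hξpos : 0 < ξ := lt_of_le_of_lt (norm_nonneg (x₁ - y)) hξ.1
    -- find a point on the segment realizing radius ξ
    have hφ : Continuous (fun t : ℝ => ‖(x₁ + t • (x₂ - x₁)) - y‖) := by continuity
    have hiv := intermediate_value_Icc (by norm_num : (0:ℝ) ≤ 1) hφ.continuousOn
    have hmem : ξ ∈ Set.Icc ‖x₁ + (0:ℝ) • (x₂ - x₁) - y‖ ‖x₁ + (1:ℝ) • (x₂ - x₁) - y‖ := by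
      simp only [zero_smul, add_zero, one_smul]
      have : x₁ + (x₂ - x₁) = x₂ := by abel
      rw [this]
      exact ⟨le_of_lt hξ.1, le_of_lt hξ.2⟩
    obtain ⟨t, ht, hφt⟩ := hiv hmem
    set x' := x₁ + t • (x₂ - x₁) with hx'def
    have hx'ball : x' ∈ Metric.ball x ε := by
      have hrepr : x' = (1 - t) • x₁ + t • x₂ := by
        rw [hx'def, smul_sub, sub_smul, one_smul]; abel
      rw [hrepr]
      exact (convex_ball x ε) h₁ h₂ (by linarith [ht.2]) ht.1 (by ring)
    have hb' := hb x' hx'ball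
    have hφt' : ‖x' - y‖ = ξ := hφt
    have habs : |(-(ρ' (ξ / τ) / τ) * Real.exp (-ρ (ξ / τ)))|
        = (τ ^ 2)⁻¹ * |radialWeight ρ' τ ‖x' - y‖| * ‖y - x'‖ * radialKernel D ρ τ x' y := by
      rw [norm_sub_rev y x', hφt']
      unfold radialWeight radialKernel
      rw [hφt', abs_mul, abs_neg, abs_div, abs_of_pos (Real.exp_pos _),
        abs_of_pos hτ, abs_div, abs_of_pos (div_pos hξpos hτ)]
      field_simp
    have hbd : |(-(ρ' (ξ / τ) / τ) * Real.exp (-ρ (ξ / τ)))| ≤ C := by rw [habs]; exact hb'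
    have hkey : radialKernel D ρ τ x₂ y - radialKernel D ρ τ x₁ y
        = (-(ρ' (ξ / τ) / τ) * Real.exp (-ρ (ξ / τ))) * (‖x₂ - y‖ - ‖x₁ - y‖) := by
      have hne : ‖x₂ - y‖ - ‖x₁ - y‖ ≠ 0 := sub_ne_zero.mpr (ne_of_gt hlt)
      rw [radialKernel, radialKernel, hslope, div_mul_cancel₀ _ hne]
    have hrr : ‖x₂ - y‖ - ‖x₁ - y‖ ≤ ‖x₁ - x₂‖ := by
      have h1 := abs_norm_sub_norm_le (x₂ - y) (x₁ - y)
      have h2 : x₂ - y - (x₁ - y) = x₂ - x₁ := by abel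
      rw [h2] at h1
      calc ‖x₂ - y‖ - ‖x₁ - y‖ ≤ |‖x₂ - y‖ - ‖x₁ - y‖| := le_abs_self _
        _ ≤ ‖x₂ - x₁‖ := h1
        _ = ‖x₁ - x₂‖ := norm_sub_rev _ _
    rw [abs_sub_comm, hkey, abs_mul, abs_of_nonneg (by linarith : (0:ℝ) ≤ ‖x₂ - y‖ - ‖x₁ - y‖)]
    calc |(-(ρ' (ξ / τ) / τ) * Real.exp (-ρ (ξ / τ)))| * (‖x₂ - y‖ - ‖x₁ - y‖)
        ≤ C * (‖x₂ - y‖ - ‖x₁ - y‖) := by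
          apply mul_le_mul_of_nonneg_right hbd (by linarith)
      _ ≤ C * ‖x₁ - x₂‖ := mul_le_mul_of_nonneg_left hrr hC

/-- weighted-score representation for radial kernels.
For a radial kernel `k_τ(x,y) = exp(−ρ(‖x−y‖₂/τ))` with `ρ` differentiable and a
distribution `π` with density whose relevant expectations are finite, wherever the
kernel-induced score exists it satisfies
`τ² s_{π,k_τ}(x) = E_{y∼π_τ(·|x)}[ b_τ(‖x−y‖₂) (y − x) ]`. -/
theorem radial_weighted_score_ratio {D : ℕ} (ρ ρ' : ℝ → ℝ) (τ : ℝ) (hτ : 0 < τ)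
    (hρ : ∀ r, HasDerivAt ρ (ρ' r) r)
    (π : Measure (EuclideanSpace ℝ (Fin D))) [IsProbabilityMeasure π]
    (hac : π ≪ volume)
    (x : EuclideanSpace ℝ (Fin D))
    (hk : Integrable (fun y => radialKernel D ρ τ x y) π)
    (hkb : Integrable
      (fun y => (radialKernel D ρ τ x y * radialWeight ρ' τ ‖x - y‖) • (y - x)) π)
    (hpos : 0 < smoothedProfile (radialKernel D ρ τ) π x)
    (hdom : ∃ ε > 0, ∃ g : EuclideanSpace ℝ (Fin D) → ℝ, Integrable g π ∧
      ∀ᵐ y ∂π, ∀ x' ∈ Metric.ball x ε,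
        (τ ^ 2)⁻¹ * |radialWeight ρ' τ ‖x' - y‖| * ‖y - x'‖ * radialKernel D ρ τ x' y ≤ g y) :
    τ ^ 2 • kernelScore (radialKernel D ρ τ) π x
      = reweightedExp (radialKernel D ρ τ) π x
          (fun y => radialWeight ρ' τ ‖x - y‖ • (y - x)) := by
  classical
  by_cases hD : D = 0
  · subst hD
    haveI : Subsingleton (EuclideanSpace ℝ (Fin 0)) := ⟨fun a b => PiLp.ext fun i => i.elim0⟩
    exact Subsingleton.elim _ _
  haveI : Nonempty (Fin D) := ⟨⟨0, Nat.pos_of_ne_zero hD⟩⟩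
  haveI : Nontrivial (EuclideanSpace ℝ (Fin D)) := inferInstance
  obtain ⟨ε, εpos, g, hg_int, hbound⟩ := hdom
  have hτ2 : (τ : ℝ) ^ 2 ≠ 0 := pow_ne_zero _ (ne_of_gt hτ)
  -- a.e. y ≠ x
  have hxae : ∀ᵐ y ∂π, y ≠ x := by
    have h0 : π {x} = 0 := hac (measure_singleton x)
    rw [MeasureTheory.ae_iff]
    convert h0 using 2
    ext y
    simp
  -- measurability of ρ'
  have hρ'meas : Measurable ρ' := by
    have : ρ' = deriv ρ := funext fun r => ((hρ r).deriv).symm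
    rw [this]
    exact measurable_deriv ρ
  have hρcont : Continuous ρ := continuous_iff_continuousAt.mpr fun r => (hρ r).continuousAt
  have hkcont : ∀ x', Continuous (fun y => radialKernel D ρ τ x' y) := by
    intro x'
    exact Real.continuous_exp.comp ((hρcont.comp
      ((continuous_const.sub continuous_id).norm.div_const τ)).neg)
  -- the vector field G
  set G : EuclideanSpace ℝ (Fin D) → EuclideanSpace ℝ (Fin D) :=
    fun y => (τ ^ 2)⁻¹ • (radialKernel D ρ τ x y * radialWeight ρ' τ ‖x - y‖) • (y - x)
    with hGdef
  have hG_int : Integrable G π := hkb.smul ((τ ^ 2)⁻¹ : ℝ)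
  have hG_meas : AEStronglyMeasurable G π := hG_int.aestronglyMeasurable
  have hF'_meas : AEStronglyMeasurable (fun y => (innerSL ℝ) (G y)) π :=
    (innerSL ℝ).continuous.comp_aestronglyMeasurable hG_meas
  have hF_meas : ∀ᶠ x' in nhds x,
      AEStronglyMeasurable (fun y => radialKernel D ρ τ x' y) π :=
    Filter.Eventually.of_forall fun x' => (hkcont x').aestronglyMeasurable
  have h_lip : ∀ᵐ y ∂π, LipschitzOnWith (Real.nnabs (g y))
      (fun x' => radialKernel D ρ τ x' y) (Metric.ball x ε) := by
    filter_upwards [hbound] with y hb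
    rw [lipschitzOnWith_iff_dist_le_mul]
    intro x₁ h₁ x₂ h₂
    have hcoe : (Real.nnabs (g y) : ℝ) = |g y| := rfl
    rw [Real.dist_eq, dist_eq_norm, hcoe]
    have hb' : ∀ x' ∈ Metric.ball x ε,
        (τ ^ 2)⁻¹ * |radialWeight ρ' τ ‖x' - y‖| * ‖y - x'‖ * radialKernel D ρ τ x' y
          ≤ |g y| := fun x' hx' => le_trans (hb x' hx') (le_abs_self _)
    rcases le_total ‖x₁ - y‖ ‖x₂ - y‖ with hle | hle
    · exact kernel_pair_bound ρ ρ' τ hτ hρ x ε y (|g y|) hb' h₁ h₂ hle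
    · rw [abs_sub_comm, norm_sub_rev]
      exact kernel_pair_bound ρ ρ' τ hτ hρ x ε y (|g y|) hb' h₂ h₁ hle
  have h_diff : ∀ᵐ y ∂π, HasFDerivAt (fun x' => radialKernel D ρ τ x' y)
      ((innerSL ℝ) (G y)) x := by
    filter_upwards [hxae] with y hy
    exact kernel_hasFDerivAt ρ ρ' τ hτ hρ y x (fun hc => hy hc.symm)
  have key := hasFDerivAt_integral_of_dominated_loc_of_lip (Metric.ball_mem_nhds x εpos) hF_meas hk hF'_meas
    h_lip hg_int h_diff
  have hswap : (∫ y, (innerSL ℝ) (G y) ∂π) = (innerSL ℝ) (∫ y, G y ∂π) :=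
    (ContinuousLinearMap.integral_comp_comm _ hG_int)
  have hgrad : HasGradientAt (smoothedProfile (radialKernel D ρ τ) π) (∫ y, G y ∂π) x := by
    rw [hasGradientAt_iff_hasFDerivAt]
    have h2 := key.2
    rw [hswap] at h2
    exact h2.congr_fderiv (by ext z; simp [InnerProductSpace.toDual_apply_apply])
  have hlog : HasGradientAt (fun z => Real.log (smoothedProfile (radialKernel D ρ τ) π z))
      ((smoothedProfile (radialKernel D ρ τ) π x)⁻¹ • ∫ y, G y ∂π) x := by
    rw [hasGradientAt_iff_hasFDerivAt]
    have := (Real.hasDerivAt_log (ne_of_gt hpos)).comp_hasFDerivAt x hgrad.hasFDerivAt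
    refine this.congr_fderiv ?_
    ext z
    simp [InnerProductSpace.toDual_apply_apply, real_inner_smul_left, inner_smul_left]
  have hscore : kernelScore (radialKernel D ρ τ) π x
      = (smoothedProfile (radialKernel D ρ τ) π x)⁻¹ • ∫ y, G y ∂π := hlog.gradient
  rw [hscore, reweightedExp]
  have hint_eq : (∫ y, radialKernel D ρ τ x y •
        (radialWeight ρ' τ ‖x - y‖ • (y - x)) ∂π)
      = ∫ y, (radialKernel D ρ τ x y * radialWeight ρ' τ ‖x - y‖) • (y - x) ∂π := by
    congr 1
    funext y
    rw [smul_smul]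
  rw [hint_eq]
  have hGint_eq : (∫ y, G y ∂π)
      = (τ ^ 2)⁻¹ • ∫ y, (radialKernel D ρ τ x y * radialWeight ρ' τ ‖x - y‖) • (y - x) ∂π := by
    rw [hGdef, integral_smul]
  rw [hGint_eq, smul_comm ((τ:ℝ)^2), smul_smul ((τ:ℝ)^2), mul_inv_cancel₀ hτ2, one_smul]
end

section
/- (Mixed distances concentrate in L².) Let R₀ > 0, σ ≥ 0, κ ≥ 0, and D ≥ 1. Let x and y be independent random vectors in ℝ^D satisfying E[(‖x‖₂² − R₀²)²] ≤ σ²R₀⁴/D, E[(‖y‖₂² − R₀²)²] ≤ σ²R₀⁴/D, and E[⟨x,y⟩²] ≤ κR₀⁴/D. Set S = ‖x − y‖₂ and ρ = √2·R₀. Then E[(S − ρ)²] ≤ 3(2σ² + 4κ)R₀²/D. -/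
set_option maxHeartbeats 1000000


open MeasureTheory ProbabilityTheory

/-- Mixed distances concentrate in L².
Let `x, y` be independent random vectors in `ℝ^D` with
`E[(‖x‖² − R₀²)²] ≤ σ²R₀⁴/D`, `E[(‖y‖² − R₀²)²] ≤ σ²R₀⁴/D`, and `E[⟨x,y⟩²] ≤ κR₀⁴/D`.
Then with `S = ‖x − y‖₂` and `ρ = √2·R₀`, one has `E[(S − ρ)²] ≤ 3(2σ² + 4κ)R₀²/D`. -/
theorem mixed_distance_L2_concentration {D : ℕ} (hD : 1 ≤ D)
    (R₀ σ κ : ℝ) (hR₀ : 0 < R₀) (hσ : 0 ≤ σ) (hκ : 0 ≤ κ)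
    {Ω : Type*} [MeasureSpace Ω] [IsProbabilityMeasure (ℙ : Measure Ω)]
    (x y : Ω → EuclideanSpace ℝ (Fin D))
    (hx : Measurable x) (hy : Measurable y)
    (hindep : IndepFun x y ℙ)
    (hx2 : Integrable (fun ω => (‖x ω‖ ^ 2 - R₀ ^ 2) ^ 2) ℙ)
    (hy2 : Integrable (fun ω => (‖y ω‖ ^ 2 - R₀ ^ 2) ^ 2) ℙ)
    (hip2 : Integrable (fun ω => (inner ℝ (x ω) (y ω) : ℝ) ^ 2) ℙ)
    (hxshell : ∫ ω, (‖x ω‖ ^ 2 - R₀ ^ 2) ^ 2 ∂ℙ ≤ σ ^ 2 * R₀ ^ 4 / D)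
    (hyshell : ∫ ω, (‖y ω‖ ^ 2 - R₀ ^ 2) ^ 2 ∂ℙ ≤ σ ^ 2 * R₀ ^ 4 / D)
    (hip : ∫ ω, (inner ℝ (x ω) (y ω) : ℝ) ^ 2 ∂ℙ ≤ κ * R₀ ^ 4 / D) :
    ∫ ω, (‖x ω - y ω‖ - Real.sqrt 2 * R₀) ^ 2 ∂ℙ
      ≤ 3 * (2 * σ ^ 2 + 4 * κ) * R₀ ^ 2 / D := by
  have hD' : (1:ℝ) ≤ (D:ℝ) := by exact_mod_cast hD
  have hDpos : (0:ℝ) < (D:ℝ) := lt_of_lt_of_le one_pos hD'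
  set ρ : ℝ := Real.sqrt 2 * R₀ with hρdef
  have hρpos : 0 < ρ := by positivity
  have hρ2 : ρ ^ 2 = 2 * R₀ ^ 2 := by
    rw [hρdef, mul_pow, Real.sq_sqrt (by norm_num : (0:ℝ) ≤ 2)]
  set g : Ω → ℝ := fun ω =>
    (3 / (2 * R₀ ^ 2)) * ((‖x ω‖ ^ 2 - R₀ ^ 2) ^ 2 + (‖y ω‖ ^ 2 - R₀ ^ 2) ^ 2
      + 4 * (inner ℝ (x ω) (y ω) : ℝ) ^ 2) with hgdef
  have key : ∀ ω, (‖x ω - y ω‖ - ρ) ^ 2 ≤ g ω := by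
    intro ω
    set S := ‖x ω - y ω‖ with hS
    have hS0 : 0 ≤ S := norm_nonneg _
    set a := ‖x ω‖ ^ 2 - R₀ ^ 2 with ha
    set b := ‖y ω‖ ^ 2 - R₀ ^ 2 with hb
    set c := (inner ℝ (x ω) (y ω) : ℝ) with hc
    have hSsq : S ^ 2 = ‖x ω‖ ^ 2 - 2 * c + ‖y ω‖ ^ 2 := by
      rw [hS, hc, @norm_sub_sq_real]
    have hSρ : S ^ 2 - ρ ^ 2 = a + b - 2 * c := by
      rw [hSsq, hρ2, ha, hb]; ring
    have h1 : (S - ρ) ^ 2 * ρ ^ 2 ≤ (S ^ 2 - ρ ^ 2) ^ 2 := by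
      have := mul_nonneg (sq_nonneg (S - ρ))
        (by nlinarith [mul_nonneg hS0 hρpos.le] : (0:ℝ) ≤ S ^ 2 + 2 * S * ρ)
      nlinarith [this]
    have h2 : (S ^ 2 - ρ ^ 2) ^ 2 ≤ 3 * (a ^ 2 + b ^ 2 + 4 * c ^ 2) := by
      rw [hSρ]
      nlinarith [sq_nonneg (a - b), sq_nonneg (a + 2 * c), sq_nonneg (b + 2 * c)]
    have h3 : (S - ρ) ^ 2 * (2 * R₀ ^ 2) ≤ 3 * (a ^ 2 + b ^ 2 + 4 * c ^ 2) := by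
      calc (S - ρ) ^ 2 * (2 * R₀ ^ 2) = (S - ρ) ^ 2 * ρ ^ 2 := by rw [hρ2]
        _ ≤ (S ^ 2 - ρ ^ 2) ^ 2 := h1
        _ ≤ 3 * (a ^ 2 + b ^ 2 + 4 * c ^ 2) := h2
    have hpos : (0:ℝ) < 2 * R₀ ^ 2 := by positivity
    have := (le_div_iff₀ hpos).2 h3
    simpa [hgdef, div_mul_eq_mul_div, mul_comm, mul_left_comm, mul_assoc] using this
  have hg_int : Integrable g ℙ :=
    (((hx2.add hy2).add (hip2.const_mul 4)).const_mul (3 / (2 * R₀ ^ 2)))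
  have hf_meas : AEStronglyMeasurable (fun ω => (‖x ω - y ω‖ - ρ) ^ 2) ℙ :=
    ((((hx.sub hy).norm.sub measurable_const).pow_const 2)).aestronglyMeasurable
  have hf_int : Integrable (fun ω => (‖x ω - y ω‖ - ρ) ^ 2) ℙ :=
    hg_int.mono' hf_meas (ae_of_all _ fun ω => by
      rw [Real.norm_eq_abs, abs_of_nonneg (sq_nonneg _)]; exact key ω)
  have hmono : ∫ ω, (‖x ω - y ω‖ - ρ) ^ 2 ∂ℙ ≤ ∫ ω, g ω ∂ℙ :=
    integral_mono hf_int hg_int key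
  have hg_eq : ∫ ω, g ω ∂ℙ = (3 / (2 * R₀ ^ 2)) *
      ((∫ ω, (‖x ω‖ ^ 2 - R₀ ^ 2) ^ 2 ∂ℙ) + (∫ ω, (‖y ω‖ ^ 2 - R₀ ^ 2) ^ 2 ∂ℙ)
        + 4 * (∫ ω, (inner ℝ (x ω) (y ω) : ℝ) ^ 2 ∂ℙ)) := by
    have hA : Integrable (fun ω => (‖x ω‖ ^ 2 - R₀ ^ 2) ^ 2 + (‖y ω‖ ^ 2 - R₀ ^ 2) ^ 2) ℙ :=
      hx2.add hy2
    have hB : Integrable (fun ω => 4 * (inner ℝ (x ω) (y ω) : ℝ) ^ 2) ℙ := hip2.const_mul 4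
    rw [hgdef, integral_const_mul, integral_add hA hB, integral_add hx2 hy2,
      integral_const_mul]
  have hsum : (∫ ω, (‖x ω‖ ^ 2 - R₀ ^ 2) ^ 2 ∂ℙ) + (∫ ω, (‖y ω‖ ^ 2 - R₀ ^ 2) ^ 2 ∂ℙ)
      + 4 * (∫ ω, (inner ℝ (x ω) (y ω) : ℝ) ^ 2 ∂ℙ)
      ≤ (2 * σ ^ 2 + 4 * κ) * R₀ ^ 4 / D := by
    have h4 : 4 * (∫ ω, (inner ℝ (x ω) (y ω) : ℝ) ^ 2 ∂ℙ) ≤ 4 * (κ * R₀ ^ 4 / D) := by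
      linarith
    have : (2 * σ ^ 2 + 4 * κ) * R₀ ^ 4 / D
        = σ ^ 2 * R₀ ^ 4 / D + σ ^ 2 * R₀ ^ 4 / D + 4 * (κ * R₀ ^ 4 / D) := by ring
    rw [this]; linarith
  have hfinal : (3 / (2 * R₀ ^ 2)) * ((2 * σ ^ 2 + 4 * κ) * R₀ ^ 4 / D)
      ≤ 3 * (2 * σ ^ 2 + 4 * κ) * R₀ ^ 2 / D := by
    have hhalf : 3 / (2 * R₀ ^ 2) * ((2 * σ ^ 2 + 4 * κ) * R₀ ^ 4 / D)
        = (3 * (2 * σ ^ 2 + 4 * κ) * R₀ ^ 2 / D) / 2 := by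
      field_simp
    rw [hhalf]
    have h0 : (0:ℝ) ≤ 3 * (2 * σ ^ 2 + 4 * κ) * R₀ ^ 2 / D := by positivity
    linarith
  calc ∫ ω, (‖x ω - y ω‖ - ρ) ^ 2 ∂ℙ ≤ ∫ ω, g ω ∂ℙ := hmono
    _ = (3 / (2 * R₀ ^ 2)) * (_ + _ + 4 * _) := hg_eq
    _ ≤ (3 / (2 * R₀ ^ 2)) * ((2 * σ ^ 2 + 4 * κ) * R₀ ^ 4 / D) := by
        apply mul_le_mul_of_nonneg_left hsum (by positivity)
    _ ≤ 3 * (2 * σ ^ 2 + 4 * κ) * R₀ ^ 2 / D := hfinal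
end

section
/- (Fourth-moment bound for mixed distances.) Let R₀ > 0 and constants C₁, C₂ < ∞, and D ≥ 1. Let x and y be independent random vectors in ℝ^D satisfying E[(‖x‖₂² − R₀²)⁴] ≤ C₁R₀⁸/D², E[(‖y‖₂² − R₀²)⁴] ≤ C₁R₀⁸/D², and E[⟨x,y⟩⁴] ≤ C₂R₀⁸/D². Set S = ‖x − y‖₂ and ρ = √2·R₀. Then E[(S − ρ)⁴] ≤ (27(2C₁ + 16C₂)R₀⁴/4) / D². -/
open MeasureTheory ProbabilityTheory

lemma aux_pow3sum (u v w : ℝ) : (u + v + w)^4 ≤ 27 * (u^4 + v^4 + w^4) := by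
  nlinarith [sq_nonneg (u-v), sq_nonneg (v-w), sq_nonneg (u-w), sq_nonneg (u+v+w),
    sq_nonneg (u^2+v^2+w^2), sq_nonneg (u^2-v^2), sq_nonneg (v^2-w^2), sq_nonneg (u^2-w^2),
    sq_nonneg (u*v - v*w), sq_nonneg ((u+v+w)^2)]

lemma aux_sqrt_pow (S ρ : ℝ) (hS : 0 ≤ S) (hρ : 0 < ρ) :
    (S - ρ)^4 ≤ (S^2 - ρ^2)^4 / ρ^4 := by
  rw [le_div_iff₀ (by positivity)]
  have h1 : (S^2 - ρ^2)^4 = (S - ρ)^4 * (S + ρ)^4 := by ring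
  rw [h1]
  have h2 : ρ^4 ≤ (S + ρ)^4 := by
    apply pow_le_pow_left₀ hρ.le; linarith
  have h3 : 0 ≤ (S - ρ)^4 := by positivity
  nlinarith [mul_le_mul_of_nonneg_left h2 h3]

/-- Fourth-moment bound for mixed distances.
Let `x, y` be independent random vectors in `ℝ^D` with
`E[(‖x‖² − R₀²)⁴] ≤ C₁R₀⁸/D²`, `E[(‖y‖² − R₀²)⁴] ≤ C₁R₀⁸/D²`, and
`E[⟨x,y⟩⁴] ≤ C₂R₀⁸/D²`.  Then with `S = ‖x − y‖₂` and `ρ = √2·R₀`, one has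
`E[(S − ρ)⁴] ≤ (27(2C₁ + 16C₂)R₀⁴/4)/D²`. -/
theorem mixed_distance_L4_bound {D : ℕ} (hD : 1 ≤ D)
    (R₀ C₁ C₂ : ℝ) (hR₀ : 0 < R₀) (hC₁ : 0 ≤ C₁) (hC₂ : 0 ≤ C₂)
    {Ω : Type*} [MeasureSpace Ω] [IsProbabilityMeasure (ℙ : Measure Ω)]
    (x y : Ω → EuclideanSpace ℝ (Fin D))
    (hx : Measurable x) (hy : Measurable y)
    (hindep : IndepFun x y ℙ)
    (hx4 : Integrable (fun ω => (‖x ω‖ ^ 2 - R₀ ^ 2) ^ 4) ℙ)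
    (hy4 : Integrable (fun ω => (‖y ω‖ ^ 2 - R₀ ^ 2) ^ 4) ℙ)
    (hip4 : Integrable (fun ω => (inner ℝ (x ω) (y ω) : ℝ) ^ 4) ℙ)
    (hxshell : ∫ ω, (‖x ω‖ ^ 2 - R₀ ^ 2) ^ 4 ∂ℙ ≤ C₁ * R₀ ^ 8 / D ^ 2)
    (hyshell : ∫ ω, (‖y ω‖ ^ 2 - R₀ ^ 2) ^ 4 ∂ℙ ≤ C₁ * R₀ ^ 8 / D ^ 2)
    (hip : ∫ ω, (inner ℝ (x ω) (y ω) : ℝ) ^ 4 ∂ℙ ≤ C₂ * R₀ ^ 8 / D ^ 2) :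
    ∫ ω, (‖x ω - y ω‖ - Real.sqrt 2 * R₀) ^ 4 ∂ℙ
      ≤ (27 * (2 * C₁ + 16 * C₂) * R₀ ^ 4 / 4) / D ^ 2 := by
  set ρ : ℝ := Real.sqrt 2 * R₀ with hρdef
  have hρpos : 0 < ρ := by positivity
  have hρsq : ρ ^ 2 = 2 * R₀ ^ 2 := by
    rw [hρdef, mul_pow, Real.sq_sqrt (by norm_num : (2:ℝ) ≥ 0)]
  have hρ4 : ρ ^ 4 = 4 * R₀ ^ 4 := by
    have : ρ ^ 4 = (ρ ^ 2) ^ 2 := by ring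
    rw [this, hρsq]; ring
  -- g : dominating function
  set g : Ω → ℝ := fun ω =>
    (27 / (4 * R₀ ^ 4)) * ((‖x ω‖ ^ 2 - R₀ ^ 2) ^ 4 + (‖y ω‖ ^ 2 - R₀ ^ 2) ^ 4
      + 16 * (inner ℝ (x ω) (y ω) : ℝ) ^ 4) with hgdef
  have hfg : ∀ ω, (‖x ω - y ω‖ - ρ) ^ 4 ≤ g ω := by
    intro ω
    have hstep := aux_sqrt_pow (‖x ω - y ω‖) ρ (norm_nonneg _) hρpos
    have hnorm : ‖x ω - y ω‖ ^ 2 = ‖x ω‖ ^ 2 - 2 * (inner ℝ (x ω) (y ω) : ℝ) + ‖y ω‖ ^ 2 := by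
      rw [norm_sub_sq_real]
    have hexp : ‖x ω - y ω‖ ^ 2 - ρ ^ 2
        = (‖x ω‖ ^ 2 - R₀ ^ 2) + (‖y ω‖ ^ 2 - R₀ ^ 2) + (-2 * (inner ℝ (x ω) (y ω) : ℝ)) := by
      rw [hnorm, hρsq]; ring
    have hsum := aux_pow3sum (‖x ω‖ ^ 2 - R₀ ^ 2) (‖y ω‖ ^ 2 - R₀ ^ 2)
      (-2 * (inner ℝ (x ω) (y ω) : ℝ))
    calc (‖x ω - y ω‖ - ρ) ^ 4 ≤ (‖x ω - y ω‖ ^ 2 - ρ ^ 2) ^ 4 / ρ ^ 4 := hstep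
      _ ≤ 27 * ((‖x ω‖ ^ 2 - R₀ ^ 2) ^ 4 + (‖y ω‖ ^ 2 - R₀ ^ 2) ^ 4
            + (-2 * (inner ℝ (x ω) (y ω) : ℝ)) ^ 4) / ρ ^ 4 := by
          apply div_le_div_of_nonneg_right _ (by positivity)
          · rw [hexp]; exact hsum
      _ = g ω := by rw [hρ4, hgdef]; ring
  have hg_int : Integrable g ℙ :=
    (((hx4.add hy4).add (hip4.const_mul 16)).const_mul _)
  have hf_meas : AEStronglyMeasurable (fun ω => (‖x ω - y ω‖ - ρ) ^ 4) ℙ := by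
    exact (((((hx.sub hy).norm).sub measurable_const).pow_const 4)).aestronglyMeasurable
  have hf_int : Integrable (fun ω => (‖x ω - y ω‖ - ρ) ^ 4) ℙ := by
    apply Integrable.mono' hg_int hf_meas
    filter_upwards with ω
    rw [Real.norm_eq_abs, abs_of_nonneg (by positivity)]
    exact hfg ω
  have hle : ∫ ω, (‖x ω - y ω‖ - ρ) ^ 4 ∂ℙ ≤ ∫ ω, g ω ∂ℙ :=
    integral_mono hf_int hg_int hfg
  have hgint_eq : ∫ ω, g ω ∂ℙ = (27 / (4 * R₀ ^ 4)) *
      ((∫ ω, (‖x ω‖ ^ 2 - R₀ ^ 2) ^ 4 ∂ℙ) + (∫ ω, (‖y ω‖ ^ 2 - R₀ ^ 2) ^ 4 ∂ℙ)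
        + 16 * ∫ ω, (inner ℝ (x ω) (y ω) : ℝ) ^ 4 ∂ℙ) := by
    have hab : Integrable (fun ω => (‖x ω‖ ^ 2 - R₀ ^ 2) ^ 4 + (‖y ω‖ ^ 2 - R₀ ^ 2) ^ 4) ℙ :=
      hx4.add hy4
    have hc : Integrable (fun ω => 16 * (inner ℝ (x ω) (y ω) : ℝ) ^ 4) ℙ := hip4.const_mul 16
    rw [hgdef]
    rw [integral_const_mul, integral_add hab hc, integral_add hx4 hy4, integral_const_mul]
  have hsum_le : (∫ ω, (‖x ω‖ ^ 2 - R₀ ^ 2) ^ 4 ∂ℙ) + (∫ ω, (‖y ω‖ ^ 2 - R₀ ^ 2) ^ 4 ∂ℙ)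
        + 16 * (∫ ω, (inner ℝ (x ω) (y ω) : ℝ) ^ 4 ∂ℙ)
      ≤ (2 * C₁ + 16 * C₂) * R₀ ^ 8 / D ^ 2 := by
    have h16 : 16 * (∫ ω, (inner ℝ (x ω) (y ω) : ℝ) ^ 4 ∂ℙ) ≤ 16 * (C₂ * R₀ ^ 8 / D ^ 2) := by
      linarith
    have : (2 * C₁ + 16 * C₂) * R₀ ^ 8 / D ^ 2
        = C₁ * R₀ ^ 8 / D ^ 2 + C₁ * R₀ ^ 8 / D ^ 2 + 16 * (C₂ * R₀ ^ 8 / D ^ 2) := by ring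
    rw [this]; linarith
  calc ∫ ω, (‖x ω - y ω‖ - ρ) ^ 4 ∂ℙ ≤ ∫ ω, g ω ∂ℙ := hle
    _ ≤ (27 / (4 * R₀ ^ 4)) * ((2 * C₁ + 16 * C₂) * R₀ ^ 8 / D ^ 2) := by
        rw [hgint_eq]
        apply mul_le_mul_of_nonneg_left hsum_le (by positivity)
    _ = (27 * (2 * C₁ + 16 * C₂) * R₀ ^ 4 / 4) / D ^ 2 := by
        field_simp
end
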